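/- Let B_{m,i} = {x ∈ ℤ₄^{2m} : wt₀(x)=2m−i, wt₁(x)=i} and C_{m,u,v} = {x : wt₁(x)=u, wt₃(x)=v, wt₀(x)=2m−u−v}. Then C_{m,u,v} meets the difference multiset B_{m,i} − B_{m,j} (i.e., some element of C_{m,u,v} can be written as b₁ − b₂ with b₁ ∈ B_{m,i}, b₂ ∈ B_{m,j}) if and only if i = u+h and j = v+h for some 0 ≤ h ≤ 2m−u−v. -/

import Mathlib

open Finset

/-- `wt_j(x)`: the number of coordinates of `x` equal to `j`. -/
def wt {n : ℕ} (j : ZMod 4) (x : Fin n → ZMod 4) : ℕ :=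
  (Finset.univ.filter fun i => x i = j).card

/-- `B_{m,i} = {x ∈ ℤ₄^{2m} : wt₀(x) = 2m - i, wt₁(x) = i}`. -/
def Bset (m i : ℕ) : Finset (Fin (2 * m) → ZMod 4) :=
  Finset.univ.filter fun x => wt 0 x = 2 * m - i ∧ wt 1 x = i

/-- `C_{m,u,v} = {x ∈ ℤ₄^{2m} : wt₁(x) = u, wt₃(x) = v, wt₀(x) = 2m - u - v}`. -/
def Cset (m u v : ℕ) : Finset (Fin (2 * m) → ZMod 4) :=
  Finset.univ.filter fun x => wt 1 x = u ∧ wt 3 x = v ∧ wt 0 x = 2 * m - u - v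

lemma fin_card_eq (n : ℕ) (P : ℕ → Prop) [DecidablePred P] :
    (Finset.univ.filter fun k : Fin n => P k.val).card
      = ((Finset.range n).filter P).card := by
  apply Finset.card_bij (fun k _ => k.val)
  · intro a ha
    simp only [mem_filter, mem_univ, true_and] at ha
    simp [a.isLt, ha]
  · intro a _ b _ hab
    exact Fin.val_injective hab
  · intro b hb
    simp only [mem_filter, mem_range] at hb
    exact ⟨⟨b, hb.1⟩, by simp [hb.2], rfl⟩

lemma count_lt (n a : ℕ) (ha : a ≤ n) :
    (Finset.univ.filter fun k : Fin n => k.val < a).card = a := by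
  rw [fin_card_eq n (fun t => t < a)]
  have h : (Finset.range n).filter (fun k => k < a) = Finset.range a := by
    ext t; simp only [mem_filter, mem_range]; omega
  rw [h, Finset.card_range]

lemma count_Ico (n a b : ℕ) (hb : b ≤ n) :
    (Finset.univ.filter fun k : Fin n => a ≤ k.val ∧ k.val < b).card = b - a := by
  rw [fin_card_eq n (fun t => a ≤ t ∧ t < b)]
  have h : (Finset.range n).filter (fun k => a ≤ k ∧ k < b) = Finset.Ico a b := by
    ext t; simp only [mem_filter, mem_range, Finset.mem_Ico]; omega
  rw [h, Nat.card_Ico]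

lemma count_ge (n a : ℕ) :
    (Finset.univ.filter fun k : Fin n => a ≤ k.val).card = n - a := by
  rw [fin_card_eq n (fun t => a ≤ t)]
  have h : (Finset.range n).filter (fun k => a ≤ k) = Finset.Ico a n := by
    ext t; simp only [mem_filter, mem_range, Finset.mem_Ico]; omega
  rw [h, Nat.card_Ico]

lemma mem01 {m : ℕ} (b : Fin (2 * m) → ZMod 4) (i : ℕ) (hi : i ≤ 2 * m)
    (h0 : wt 0 b = 2 * m - i) (h1 : wt 1 b = i) (k : Fin (2 * m)) :
    b k = 0 ∨ b k = 1 := by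
  by_contra hc
  push_neg at hc
  have hd : Disjoint (univ.filter fun t => b t = 0) (univ.filter fun t => b t = 1) := by
    rw [Finset.disjoint_left]
    intro a ha ha'
    simp only [mem_filter, mem_univ, true_and] at ha ha'
    rw [ha] at ha'; exact absurd ha' (by decide)
  have hcard : ((univ.filter fun t => b t = 0) ∪ (univ.filter fun t => b t = 1)).card
      = 2 * m := by
    rw [Finset.card_union_of_disjoint hd]
    unfold wt at h0 h1; omega
  have huniv : (univ.filter fun t => b t = 0) ∪ (univ.filter fun t => b t = 1) = univ := by
    apply Finset.eq_univ_of_card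
    simpa using hcard
  have hk := Finset.eq_univ_iff_forall.mp huniv k
  simp only [mem_union, mem_filter, mem_univ, true_and] at hk
  tauto

/-- The first vector for the construction. -/
def vec1 (m u v h : ℕ) : Fin (2 * m) → ZMod 4 :=
  fun k => if k.val < u ∨ (u + v ≤ k.val ∧ k.val < u + v + h) then 1 else 0

/-- The second vector for the construction. -/
def vec2 (m u v h : ℕ) : Fin (2 * m) → ZMod 4 :=
  fun k => if u ≤ k.val ∧ k.val < u + v + h then 1 else 0

lemma cardC1 (m u v h : ℕ) (H : u + v + h ≤ 2 * m) :
    (univ.filter fun k : Fin (2 * m) =>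
      k.val < u ∨ (u + v ≤ k.val ∧ k.val < u + v + h)).card = u + h := by
  rw [Finset.filter_or, Finset.card_union_of_disjoint]
  · rw [count_lt _ _ (by omega), count_Ico _ _ _ (by omega)]; omega
  · rw [Finset.disjoint_left]
    intro a ha ha'
    simp only [mem_filter, mem_univ, true_and] at ha ha'
    omega

lemma cardC2 (m u v h : ℕ) (H : u + v + h ≤ 2 * m) :
    (univ.filter fun k : Fin (2 * m) =>
      u ≤ k.val ∧ k.val < u + v + h).card = v + h := by
  rw [count_Ico _ _ _ (by omega)]; omega

lemma wt1_vec1 (m u v h : ℕ) (H : u + v + h ≤ 2 * m) : wt 1 (vec1 m u v h) = u + h := by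
  unfold wt
  have hset : (univ.filter fun k : Fin (2 * m) => vec1 m u v h k = 1)
      = univ.filter fun k : Fin (2 * m) =>
          k.val < u ∨ (u + v ≤ k.val ∧ k.val < u + v + h) := by
    ext k
    simp only [mem_filter, mem_univ, true_and]
    simp only [vec1, mem_filter, mem_univ, true_and]
    split_ifs with hc
    · exact iff_of_true rfl hc
    · exact iff_of_false (by decide) hc
  rw [hset, cardC1 m u v h H]

lemma wt0_vec1 (m u v h : ℕ) (H : u + v + h ≤ 2 * m) :
    wt 0 (vec1 m u v h) = 2 * m - (u + h) := by
  unfold wt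
  have hset : (univ.filter fun k : Fin (2 * m) => vec1 m u v h k = 0)
      = univ.filter fun k : Fin (2 * m) =>
          ¬(k.val < u ∨ (u + v ≤ k.val ∧ k.val < u + v + h)) := by
    ext k
    simp only [mem_filter, mem_univ, true_and]
    simp only [vec1, mem_filter, mem_univ, true_and]
    split_ifs with hc
    · exact iff_of_false (by decide) (by simp [hc])
    · exact iff_of_true rfl hc
  rw [hset]
  have := Finset.card_filter_add_card_filter_not
    (s := (univ : Finset (Fin (2 * m))))
    (p := fun k : Fin (2 * m) => k.val < u ∨ (u + v ≤ k.val ∧ k.val < u + v + h))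
  rw [cardC1 m u v h H] at this
  simp only [Finset.card_univ, Fintype.card_fin] at this
  omega

lemma wt1_vec2 (m u v h : ℕ) (H : u + v + h ≤ 2 * m) : wt 1 (vec2 m u v h) = v + h := by
  unfold wt
  have hset : (univ.filter fun k : Fin (2 * m) => vec2 m u v h k = 1)
      = univ.filter fun k : Fin (2 * m) => u ≤ k.val ∧ k.val < u + v + h := by
    ext k
    simp only [mem_filter, mem_univ, true_and]
    simp only [vec2, mem_filter, mem_univ, true_and]
    split_ifs with hc
    · exact iff_of_true rfl hc
    · exact iff_of_false (by decide) hc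
  rw [hset, cardC2 m u v h H]

lemma wt0_vec2 (m u v h : ℕ) (H : u + v + h ≤ 2 * m) :
    wt 0 (vec2 m u v h) = 2 * m - (v + h) := by
  unfold wt
  have hset : (univ.filter fun k : Fin (2 * m) => vec2 m u v h k = 0)
      = univ.filter fun k : Fin (2 * m) => ¬(u ≤ k.val ∧ k.val < u + v + h) := by
    ext k
    simp only [mem_filter, mem_univ, true_and]
    simp only [vec2, mem_filter, mem_univ, true_and]
    split_ifs with hc
    · exact iff_of_false (by decide) (by simp [hc])
    · exact iff_of_true rfl hc
  rw [hset]
  have := Finset.card_filter_add_card_filter_not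
    (s := (univ : Finset (Fin (2 * m))))
    (p := fun k : Fin (2 * m) => u ≤ k.val ∧ k.val < u + v + h)
  rw [cardC2 m u v h H] at this
  simp only [Finset.card_univ, Fintype.card_fin] at this
  omega

lemma wt1_diff (m u v h : ℕ) (H : u + v + h ≤ 2 * m) :
    wt 1 (vec1 m u v h - vec2 m u v h) = u := by
  unfold wt
  have hset : (univ.filter fun k : Fin (2 * m) => (vec1 m u v h - vec2 m u v h) k = 1)
      = univ.filter fun k : Fin (2 * m) => k.val < u := by
    ext k
    simp only [mem_filter, mem_univ, true_and]
    simp only [Pi.sub_apply, vec1, vec2, mem_filter, mem_univ, true_and]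
    split_ifs with h1 h2 h3 <;>
      first
        | exact iff_of_true (by decide) (by omega)
        | exact iff_of_false (by decide) (by omega)
  rw [hset, count_lt _ _ (by omega)]

lemma wt3_diff (m u v h : ℕ) (H : u + v + h ≤ 2 * m) :
    wt 3 (vec1 m u v h - vec2 m u v h) = v := by
  unfold wt
  have hset : (univ.filter fun k : Fin (2 * m) => (vec1 m u v h - vec2 m u v h) k = 3)
      = univ.filter fun k : Fin (2 * m) => u ≤ k.val ∧ k.val < u + v := by
    ext k
    simp only [mem_filter, mem_univ, true_and]
    simp only [Pi.sub_apply, vec1, vec2, mem_filter, mem_univ, true_and]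
    split_ifs with h1 h2 h3 <;>
      first
        | exact iff_of_true (by decide) (by omega)
        | exact iff_of_false (by decide) (by omega)
  rw [hset, count_Ico _ _ _ (by omega)]; omega

lemma wt0_diff (m u v h : ℕ) (H : u + v + h ≤ 2 * m) :
    wt 0 (vec1 m u v h - vec2 m u v h) = 2 * m - u - v := by
  unfold wt
  have hset : (univ.filter fun k : Fin (2 * m) => (vec1 m u v h - vec2 m u v h) k = 0)
      = univ.filter fun k : Fin (2 * m) => u + v ≤ k.val := by
    ext k
    simp only [mem_filter, mem_univ, true_and]
    simp only [Pi.sub_apply, vec1, vec2, mem_filter, mem_univ, true_and]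
    split_ifs with h1 h2 h3 <;>
      first
        | exact iff_of_true (by decide) (by omega)
        | exact iff_of_false (by decide) (by omega)
  rw [hset, count_ge]; omega

/-- `C_{m,u,v}` meets the difference multiset `B_{m,i} - B_{m,j}` if and only
if `i = u + h` and `j = v + h` for some `0 ≤ h ≤ 2m - u - v`. -/
theorem stmt10 (m u v i j : ℕ) (huv : u + v ≤ 2 * m) (hi : i ≤ 2 * m) (hj : j ≤ 2 * m) :
    (∃ x ∈ Cset m u v, ∃ b₁ ∈ Bset m i, ∃ b₂ ∈ Bset m j, x = b₁ - b₂) ↔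
    (∃ h : ℕ, h ≤ 2 * m - u - v ∧ i = u + h ∧ j = v + h) := by
  constructor
  · rintro ⟨x, hx, b₁, hb₁, b₂, hb₂, rfl⟩
    simp only [Cset, Bset, mem_filter, mem_univ, true_and] at hx hb₁ hb₂
    obtain ⟨hx1, hx3, hx0⟩ := hx
    obtain ⟨h10, h11⟩ := hb₁
    obtain ⟨h20, h21⟩ := hb₂
    have d1 := mem01 b₁ i hi h10 h11
    have d2 := mem01 b₂ j hj h20 h21
    refine ⟨(univ.filter fun k => b₁ k = 1 ∧ b₂ k = 1).card, ?_, ?_, ?_⟩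
    · -- h ≤ 2m - u - v
      have hsub : (univ.filter fun k => b₁ k = 1 ∧ b₂ k = 1)
          ⊆ (univ.filter fun k => (b₁ - b₂) k = 0) := by
        intro k hk
        simp only [mem_filter, mem_univ, true_and, Pi.sub_apply] at hk ⊢
        rw [hk.1, hk.2]; decide
      have hle := Finset.card_le_card hsub
      unfold wt at hx0
      omega
    · -- i = u + card
      have hsplit := Finset.card_filter_add_card_filter_not
        (s := univ.filter fun k => b₁ k = 1) (p := fun k => b₂ k = 1)
      rw [Finset.filter_filter, Finset.filter_filter] at hsplit
      have e1 : (univ.filter fun k => b₁ k = 1 ∧ ¬ b₂ k = 1)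
          = univ.filter fun k => (b₁ - b₂) k = 1 := by
        ext k
        simp only [mem_filter, mem_univ, true_and, Pi.sub_apply]
        rcases d1 k with hk1 | hk1 <;> rcases d2 k with hk2 | hk2 <;>
          rw [hk1, hk2] <;> decide
      rw [e1] at hsplit
      unfold wt at h11 hx1
      omega
    · -- j = v + card
      have hsplit := Finset.card_filter_add_card_filter_not
        (s := univ.filter fun k => b₂ k = 1) (p := fun k => b₁ k = 1)
      rw [Finset.filter_filter, Finset.filter_filter] at hsplit
      have e2 : (univ.filter fun k => b₂ k = 1 ∧ b₁ k = 1)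
          = univ.filter fun k => b₁ k = 1 ∧ b₂ k = 1 := by
        ext k
        simp only [mem_filter, mem_univ, true_and]
        tauto
      have e3 : (univ.filter fun k => b₂ k = 1 ∧ ¬ b₁ k = 1)
          = univ.filter fun k => (b₁ - b₂) k = 3 := by
        ext k
        simp only [mem_filter, mem_univ, true_and, Pi.sub_apply]
        rcases d1 k with hk1 | hk1 <;> rcases d2 k with hk2 | hk2 <;>
          rw [hk1, hk2] <;> decide
      rw [e2, e3] at hsplit
      unfold wt at h21 hx3
      omega
  · rintro ⟨h, hh, rfl, rfl⟩
    have H : u + v + h ≤ 2 * m := by omega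
    refine ⟨vec1 m u v h - vec2 m u v h, ?_, vec1 m u v h, ?_, vec2 m u v h, ?_, rfl⟩
    · simp only [Cset, mem_filter, mem_univ, true_and]
      exact ⟨wt1_diff m u v h H, wt3_diff m u v h H, wt0_diff m u v h H⟩
    · simp only [Bset, mem_filter, mem_univ, true_and]
      exact ⟨wt0_vec1 m u v h H, wt1_vec1 m u v h H⟩
    · simp only [Bset, mem_filter, mem_univ, true_and]
      exact ⟨wt0_vec2 m u v h H, wt1_vec2 m u v h H⟩
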